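/- Let K ∈ ℝ, N ∈ (1,∞), D > 0 (with D ≤ π√((N−1)/K) if K > 0). Then the map a ↦ v_{K,N,D}(a) := ∫₀ᵃ h^a_{K,N,D}(x) dx is strictly increasing on (0,D) and maps (0,D) bijectively onto (0,1). -/

import Mathlib

open MeasureTheory Filter Topology

noncomputable section

/-- The comparison function `s_κ(θ)`:
`sin(√κ·θ)/√κ` if `κ > 0`, `θ` if `κ = 0`, `sinh(√(−κ)·θ)/√(−κ)` if `κ < 0`. -/
def sK (κ θ : ℝ) : ℝ :=
  if 0 < κ then Real.sin (Real.sqrt κ * θ) / Real.sqrt κ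
  else if κ = 0 then θ
  else Real.sinh (Real.sqrt (-κ) * θ) / Real.sqrt (-κ)

/-- `h` is an `MCP(K,N)`-density on the interval `I ⊆ ℝ`: it is a nonnegative Borel
function satisfying
`h(t·x₁+(1−t)·x₀) ≥ (s_{K/(N−1)}((1−t)|x₁−x₀|)/s_{K/(N−1)}(|x₁−x₀|))^{N−1}·h(x₀)`
for all `x₀, x₁ ∈ I`, `t ∈ [0,1]`; when `x₀ = x₁` the coefficient is interpreted as `1−t`,
and when `K > 0` and `|x₁−x₀| ≥ π√((N−1)/K)` the coefficient is `+∞`, forcing `h x₀ = 0`. -/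
def IsMCPDensity (K N : ℝ) (I : Set ℝ) (h : ℝ → ℝ) : Prop :=
  Measurable h ∧ (∀ x ∈ I, 0 ≤ h x) ∧
  ∀ x₀ ∈ I, ∀ x₁ ∈ I, ∀ t ∈ Set.Icc (0:ℝ) 1,
    (x₀ = x₁ → (1 - t) * h x₀ ≤ h x₀) ∧
    (x₀ ≠ x₁ →
      ((0 < K ∧ Real.pi * Real.sqrt ((N - 1) / K) ≤ |x₁ - x₀|) → h x₀ = 0) ∧
      (¬(0 < K ∧ Real.pi * Real.sqrt ((N - 1) / K) ≤ |x₁ - x₀|) →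
        (sK (K / (N - 1)) ((1 - t) * |x₁ - x₀|) / sK (K / (N - 1)) |x₁ - x₀|) ^ (N - 1) * h x₀
          ≤ h (t * x₁ + (1 - t) * x₀)))

/-- `h` is a `CD(K,N)`-density on the interval `I ⊆ ℝ`. -/
def IsCDDensity (K N : ℝ) (I : Set ℝ) (h : ℝ → ℝ) : Prop :=
  (∀ x ∈ I, 0 ≤ h x) ∧
  ∀ x₀ ∈ I, ∀ x₁ ∈ I, x₀ < x₁ → ∀ t ∈ Set.Icc (0:ℝ) 1,
    (sK (K / (N - 1)) ((1 - t) * (x₁ - x₀)) / sK (K / (N - 1)) (x₁ - x₀)) * h x₀ ^ (1 / (N - 1))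
      + (sK (K / (N - 1)) (t * (x₁ - x₀)) / sK (K / (N - 1)) (x₁ - x₀)) * h x₁ ^ (1 / (N - 1))
      ≤ h ((1 - t) * x₀ + t * x₁) ^ (1 / (N - 1))

/-- The lower-bound function `f_{K,N,D}`. -/
def fKND (K N D : ℝ) (x : ℝ) : ℝ :=
  if x = 0 ∨ x = D then 0
  else ((∫ y in (0:ℝ)..x, (sK (K / (N - 1)) (D - y) / sK (K / (N - 1)) (D - x)) ^ (N - 1)) +
        (∫ y in x..D, (sK (K / (N - 1)) y / sK (K / (N - 1)) x) ^ (N - 1)))⁻¹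

/-- The model density `h^a_{K,N,D}`. -/
def hKND (K N D a : ℝ) (x : ℝ) : ℝ :=
  if x ≤ a then fKND K N D a * (sK (K / (N - 1)) (D - x) / sK (K / (N - 1)) (D - a)) ^ (N - 1)
  else fKND K N D a * (sK (K / (N - 1)) x / sK (K / (N - 1)) a) ^ (N - 1)

/-- `v_{K,N,D}(a) = ∫₀ᵃ h^a_{K,N,D}(x) dx`. -/
def vKND (K N D a : ℝ) : ℝ := ∫ x in (0:ℝ)..a, hKND K N D a x

/-- The (outer) Minkowski content of `A` with respect to `μ`:
`liminf_{ε→0⁺} (μ(Aᵉ) − μ(A))/ε` where `Aᵉ` is the open `ε`-neighbourhood of `A`. -/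
def mink (μ : Measure ℝ) (A : Set ℝ) : ℝ :=
  Filter.liminf (fun ε : ℝ => ((μ (Metric.thickening ε A)).toReal - (μ A).toReal) / ε)
    (nhdsWithin 0 (Set.Ioi 0))

/-- The measure `μ_h = h · Leb` restricted to `[0,D]`. -/
def muh (h : ℝ → ℝ) (D : ℝ) : Measure ℝ :=
  (volume.restrict (Set.Icc (0:ℝ) D)).withDensity (fun x => ENNReal.ofReal (h x))

/-- The restricted one-dimensional isoperimetric profile `Ĩ_{K,N,D}(v)` over
`MCP(K,N)`-densities on `[0,D]` integrating to `1`. -/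
def Itilde (K N D v : ℝ) : ℝ :=
  sInf { p : ℝ | ∃ h : ℝ → ℝ, IsMCPDensity K N (Set.Icc 0 D) h ∧
    (∫ x in (0:ℝ)..D, h x) = 1 ∧
    ∃ A : Set ℝ, MeasurableSet A ∧ A ⊆ Set.Icc 0 D ∧ (muh h D A).toReal = v ∧
      p = mink (muh h D) A }

/-- The restricted one-dimensional isoperimetric profile `Ĩ^{CD}_{K,N,D}(v)` over
`CD(K,N)`-densities on `[0,D]` integrating to `1`. -/
def ItildeCD (K N D v : ℝ) : ℝ :=
  sInf { p : ℝ | ∃ h : ℝ → ℝ, IsCDDensity K N (Set.Icc 0 D) h ∧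
    (∫ x in (0:ℝ)..D, h x) = 1 ∧
    ∃ A : Set ℝ, MeasurableSet A ∧ A ⊆ Set.Icc 0 D ∧ (muh h D A).toReal = v ∧
      p = mink (muh h D) A }


private lemma sK_nonneg' {κ D θ : ℝ} (hκD : 0 < κ → Real.sqrt κ * D ≤ Real.pi)
    (h0 : 0 ≤ θ) (hθ : θ ≤ D) : 0 ≤ sK κ θ := by
  unfold sK
  split_ifs with h1 h2
  · refine div_nonneg ?_ (Real.sqrt_nonneg κ)
    refine Real.sin_nonneg_of_nonneg_of_le_pi (by positivity) ?_
    calc Real.sqrt κ * θ ≤ Real.sqrt κ * D :=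
          mul_le_mul_of_nonneg_left hθ (Real.sqrt_nonneg κ)
      _ ≤ Real.pi := hκD h1
  · exact h0
  · refine div_nonneg ?_ (Real.sqrt_nonneg _)
    exact Real.sinh_nonneg_iff.mpr (by positivity)

private lemma sK_pos' {κ D θ : ℝ} (hκD : 0 < κ → Real.sqrt κ * D ≤ Real.pi)
    (h0 : 0 < θ) (hθ : θ < D) : 0 < sK κ θ := by
  unfold sK
  split_ifs with h1 h2
  · have hs : 0 < Real.sqrt κ := Real.sqrt_pos.mpr h1
    refine div_pos (Real.sin_pos_of_pos_of_lt_pi (by positivity) ?_) hs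
    calc Real.sqrt κ * θ < Real.sqrt κ * D := by
          exact (mul_lt_mul_iff_right₀ hs).mpr hθ
      _ ≤ Real.pi := hκD h1
  · exact h0
  · have hκ : κ < 0 := lt_of_le_of_ne (not_lt.mp h1) h2
    have hs : 0 < Real.sqrt (-κ) := Real.sqrt_pos.mpr (by linarith)
    exact div_pos (Real.sinh_pos_iff.mpr (by positivity)) hs

private lemma sK_cont (κ : ℝ) : Continuous (sK κ) := by
  unfold sK
  rcases lt_trichotomy 0 κ with h | h | h
  · simp only [if_pos h]
    fun_prop
  · subst h
    norm_num
    exact continuous_id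
  · simp only [if_neg (not_lt.mpr h.le), if_neg (ne_of_lt h)]
    fun_prop

private lemma sK_cross {κ D a b : ℝ} (hκD : 0 < κ → Real.sqrt κ * D ≤ Real.pi)
    (ha : 0 ≤ a) (hab : a ≤ b) (hbD : b ≤ D) :
    sK κ a * sK κ (D - b) ≤ sK κ b * sK κ (D - a) := by
  have hD0 : 0 ≤ D := le_trans (le_trans ha hab) hbD
  unfold sK
  split_ifs with h1 h2
  · have hc0 : 0 < Real.sqrt κ := Real.sqrt_pos.mpr h1
    set c := Real.sqrt κ with hc
    have hcD : c * D ≤ Real.pi := hκD h1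
    have key : Real.sin (c * b) * Real.sin (c * (D - a))
        - Real.sin (c * a) * Real.sin (c * (D - b))
        = Real.sin (c * D) * Real.sin (c * (b - a)) := by
      simp only [mul_sub, Real.sin_sub]
      ring
    have hsD : 0 ≤ Real.sin (c * D) :=
      Real.sin_nonneg_of_nonneg_of_le_pi (by positivity) hcD
    have hsba : 0 ≤ Real.sin (c * (b - a)) := by
      refine Real.sin_nonneg_of_nonneg_of_le_pi (mul_nonneg hc0.le (by linarith)) ?_
      calc c * (b - a) ≤ c * D := by nlinarith
        _ ≤ Real.pi := hcD
    rw [div_mul_div_comm, div_mul_div_comm, div_le_div_iff₀ (by positivity) (by positivity)]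
    nlinarith [mul_nonneg hsD hsba, mul_pos hc0 hc0]
  · nlinarith [mul_nonneg (sub_nonneg.mpr hab) hD0]
  · have hκ : κ < 0 := lt_of_le_of_ne (not_lt.mp h1) h2
    have hc0 : 0 < Real.sqrt (-κ) := Real.sqrt_pos.mpr (by linarith)
    set c := Real.sqrt (-κ) with hc
    have key : Real.sinh (c * b) * Real.sinh (c * (D - a))
        - Real.sinh (c * a) * Real.sinh (c * (D - b))
        = Real.sinh (c * D) * Real.sinh (c * (b - a)) := by
      simp only [mul_sub, Real.sinh_sub]
      ring
    have hsD : 0 ≤ Real.sinh (c * D) := Real.sinh_nonneg_iff.mpr (by positivity)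
    have hsba : 0 ≤ Real.sinh (c * (b - a)) :=
      Real.sinh_nonneg_iff.mpr (mul_nonneg hc0.le (by linarith))
    rw [div_mul_div_comm, div_mul_div_comm, div_le_div_iff₀ (by positivity) (by positivity)]
    nlinarith [mul_nonneg hsD hsba, mul_pos hc0 hc0]

/-- Lemma (volume map): `a ↦ v_{K,N,D}(a) = ∫₀ᵃ h^a_{K,N,D}` is strictly increasing on
`(0,D)` and maps `(0,D)` bijectively onto `(0,1)`. -/
theorem vKND_strictMono_bijOn (K N D : ℝ) (hN : 1 < N) (hD : 0 < D)
    (hDK : 0 < K → D ≤ Real.pi * Real.sqrt ((N - 1) / K)) :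
    StrictMonoOn (vKND K N D) (Set.Ioo 0 D) ∧
    Set.BijOn (vKND K N D) (Set.Ioo 0 D) (Set.Ioo 0 1) := by
  have hN1 : (0:ℝ) < N - 1 := by linarith
  set κ := K / (N - 1) with hκ
  have hκD : 0 < κ → Real.sqrt κ * D ≤ Real.pi := by
    intro h
    have hK : 0 < K := by
      rcases lt_trichotomy 0 K with h' | h' | h'
      · exact h'
      · exfalso; rw [hκ, ← h'] at h; simp at h
      · exfalso; rw [hκ] at h; nlinarith [div_neg_of_neg_of_pos h' hN1]
    have hs : 0 < Real.sqrt κ := Real.sqrt_pos.mpr h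
    have h2 : Real.sqrt ((N - 1) / K) = (Real.sqrt κ)⁻¹ := by
      rw [hκ, ← Real.sqrt_inv, inv_div]
    have h1 := hDK hK
    rw [h2] at h1
    calc Real.sqrt κ * D ≤ Real.sqrt κ * (Real.pi * (Real.sqrt κ)⁻¹) :=
          mul_le_mul_of_nonneg_left h1 hs.le
      _ = Real.pi := by field_simp
  set g : ℝ → ℝ := fun x => sK κ x ^ (N - 1) with hg
  have hg_cont : Continuous g := (sK_cont κ).rpow_const fun x => Or.inr hN1.le
  have hgD_cont : Continuous fun x => g (D - x) :=
    hg_cont.comp (continuous_const.sub continuous_id)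
  have hIntD : ∀ a b : ℝ, IntervalIntegrable (fun x => g (D - x)) volume a b := fun a b =>
    hgD_cont.intervalIntegrable a b
  have hInt : ∀ a b : ℝ, IntervalIntegrable g volume a b := fun a b =>
    hg_cont.intervalIntegrable a b
  set A : ℝ → ℝ := fun a => ∫ x in (0:ℝ)..a, g (D - x) with hA
  set B : ℝ → ℝ := fun a => ∫ x in a..D, g x with hB
  have hg_pos : ∀ x : ℝ, 0 < x → x < D → 0 < g x := fun x h1 h2 =>
    Real.rpow_pos_of_pos (sK_pos' hκD h1 h2) _
  have hint_pos : ∀ a b : ℝ, 0 ≤ a → a < b → b ≤ D → 0 < ∫ x in a..b, g x := by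
    intro a b h1 h2 h3
    refine intervalIntegral.intervalIntegral_pos_of_pos_on (hInt a b) ?_ h2
    intro x hx
    exact hg_pos x (by linarith [hx.1]) (by linarith [hx.2])
  have hintD_pos : ∀ a b : ℝ, 0 ≤ a → a < b → b ≤ D → 0 < ∫ x in a..b, g (D - x) := by
    intro a b h1 h2 h3
    refine intervalIntegral.intervalIntegral_pos_of_pos_on (hIntD a b) ?_ h2
    intro x hx
    exact hg_pos _ (by linarith [hx.2]) (by linarith [hx.1])
  have hA_pos : ∀ a : ℝ, 0 < a → a ≤ D → 0 < A a := by
    intro a h1 h2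
    have := hintD_pos 0 a le_rfl h1 h2
    rw [hA]
    exact this
  have hB_pos : ∀ a : ℝ, 0 ≤ a → a < D → 0 < B a := by
    intro a h1 h2
    have := hint_pos a D h1 h2 le_rfl
    rw [hB]
    exact this
  have hAdiff : ∀ a b : ℝ, A b - A a = ∫ x in a..b, g (D - x) := by
    intro a b
    have h1 := intervalIntegral.integral_add_adjacent_intervals (hIntD 0 a) (hIntD a b)
    rw [hA]
    simp only
    linarith
  have hBdiff : ∀ a b : ℝ, B a - B b = ∫ x in a..b, g x := by
    intro a b
    have h1 := intervalIntegral.integral_add_adjacent_intervals (hInt a b) (hInt b D)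
    rw [hB]
    simp only
    linarith
  have hA_mono : ∀ a b : ℝ, 0 ≤ a → a < b → b ≤ D → A a < A b := by
    intro a b h1 h2 h3
    have hd := hAdiff a b
    have := hintD_pos a b h1 h2 h3
    linarith
  have hB_anti : ∀ a b : ℝ, 0 ≤ a → a < b → b ≤ D → B b < B a := by
    intro a b h1 h2 h3
    have hd := hBdiff a b
    have := hint_pos a b h1 h2 h3
    linarith
  have hA_cont : Continuous A := by
    rw [hA]
    exact intervalIntegral.continuous_primitive hIntD 0
  have hB_cont : Continuous B := by
    have hBf : B = fun a => (∫ x in (0:ℝ)..D, g x) - ∫ x in (0:ℝ)..a, g x := by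
      funext a
      have h1 := intervalIntegral.integral_add_adjacent_intervals (hInt 0 a) (hInt a D)
      rw [hB]
      simp only
      linarith
    rw [hBf]
    exact continuous_const.sub (intervalIntegral.continuous_primitive hInt 0)
  set w : ℝ → ℝ := fun a => A a * g a / (A a * g a + B a * g (D - a)) with hw
  have hden_pos : ∀ a : ℝ, 0 < a → a < D → 0 < A a * g a + B a * g (D - a) := by
    intro a h1 h2
    have hQ : 0 < g (D - a) := hg_pos _ (by linarith) (by linarith)
    exact add_pos (mul_pos (hA_pos a h1 h2.le) (hg_pos a h1 h2))
      (mul_pos (hB_pos a h1.le h2) hQ)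
  have hrep : ∀ a : ℝ, 0 < a → a < D → vKND K N D a = w a := by
    intro a h1 h2
    have hPa : 0 < g a := hg_pos a h1 h2
    have hQa : 0 < g (D - a) := hg_pos _ (by linarith) (by linarith)
    have hAa := hA_pos a h1 h2.le
    have hBa := hB_pos a h1.le h2
    have hX : (∫ y in (0:ℝ)..a, (sK κ (D - y) / sK κ (D - a)) ^ (N - 1)) = A a / g (D - a) := by
      rw [hA, hg]
      simp only
      rw [← intervalIntegral.integral_div]
      refine intervalIntegral.integral_congr fun x hx => ?_
      rw [Set.uIcc_of_le h1.le] at hx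
      exact Real.div_rpow (sK_nonneg' hκD (by linarith [hx.2]) (by linarith [hx.1]))
        (sK_nonneg' hκD (by linarith) (by linarith)) _
    have hY : (∫ y in a..D, (sK κ y / sK κ a) ^ (N - 1)) = B a / g a := by
      rw [hB, hg]
      simp only
      rw [← intervalIntegral.integral_div]
      refine intervalIntegral.integral_congr fun x hx => ?_
      rw [Set.uIcc_of_le h2.le] at hx
      exact Real.div_rpow (sK_nonneg' hκD (by linarith [hx.1]) (by linarith [hx.2]))
        (sK_nonneg' hκD h1.le h2.le) _
    have hf : fKND K N D a = (A a / g (D - a) + B a / g a)⁻¹ := by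
      simp only [fKND]
      rw [if_neg (by push_neg; exact ⟨ne_of_gt h1, ne_of_lt h2⟩), ← hκ, hX, hY]
    have hveq : vKND K N D a = fKND K N D a * (A a / g (D - a)) := by
      simp only [vKND]
      have hcongr : (∫ x in (0:ℝ)..a, hKND K N D a x)
          = ∫ x in (0:ℝ)..a, fKND K N D a * (sK κ (D - x) / sK κ (D - a)) ^ (N - 1) := by
        refine intervalIntegral.integral_congr fun x hx => ?_
        rw [Set.uIcc_of_le h1.le] at hx
        simp only [hKND]
        rw [if_pos hx.2, ← hκ]
      rw [hcongr, intervalIntegral.integral_const_mul, hX]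
    rw [hveq, hf, hw]
    simp only
    rw [div_add_div _ _ (ne_of_gt hQa) (ne_of_gt hPa), inv_div]
    field_simp
  have hflipA : ∀ a : ℝ, A (D - a) = B a := by
    intro a
    rw [hA, hB]
    simp only
    rw [intervalIntegral.integral_comp_sub_left g D]
    simp only [sub_sub_cancel, sub_zero]
  have hflipB : ∀ a : ℝ, B (D - a) = A a := by
    intro a
    rw [hA, hB]
    simp only
    rw [intervalIntegral.integral_comp_sub_left g D]
    simp only [sub_sub_cancel, sub_zero]
  have hsymm : ∀ a : ℝ, 0 < a → a < D → vKND K N D (D - a) = 1 - vKND K N D a := by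
    intro a h1 h2
    rw [hrep a h1 h2, hrep (D - a) (by linarith) (by linarith), hw]
    simp only
    rw [hflipA, hflipB, sub_sub_cancel]
    have hPa : 0 < g a := hg_pos a h1 h2
    have hQa : 0 < g (D - a) := hg_pos _ (by linarith) (by linarith)
    have hAa := hA_pos a h1 h2.le
    have hBa := hB_pos a h1.le h2
    have hS : 0 < A a * g a + B a * g (D - a) := hden_pos a h1 h2
    have hS' : 0 < B a * g (D - a) + A a * g a := by linarith
    rw [eq_sub_iff_add_eq, add_comm (B a * g (D - a)) (A a * g a), ← add_div,
      add_comm (B a * g (D - a)) (A a * g a), div_self (ne_of_gt hS)]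
  have hmono : StrictMonoOn (vKND K N D) (Set.Ioo 0 D) := by
    intro a ha b hb hab
    obtain ⟨ha1, ha2⟩ := ha
    obtain ⟨hb1, hb2⟩ := hb
    rw [hrep a ha1 ha2, hrep b hb1 hb2, hw]
    simp only
    have hPa : 0 < g a := hg_pos a ha1 ha2
    have hPb : 0 < g b := hg_pos b hb1 hb2
    have hQa : 0 < g (D - a) := hg_pos _ (by linarith) (by linarith)
    have hQb : 0 < g (D - b) := hg_pos _ (by linarith) (by linarith)
    have hAa := hA_pos a ha1 ha2.le
    have hAb := hA_pos b hb1 hb2.le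
    have hBa := hB_pos a ha1.le ha2
    have hBb := hB_pos b hb1.le hb2
    have hAab := hA_mono a b ha1.le hab hb2.le
    have hBab := hB_anti a b ha1.le hab hb2.le
    have hs1 : 0 ≤ sK κ a := sK_nonneg' hκD ha1.le ha2.le
    have hs2 : 0 ≤ sK κ (D - b) := sK_nonneg' hκD (by linarith) (by linarith)
    have hs3 : 0 ≤ sK κ b := sK_nonneg' hκD hb1.le hb2.le
    have hs4 : 0 ≤ sK κ (D - a) := sK_nonneg' hκD (by linarith) (by linarith)
    have hcross : g a * g (D - b) ≤ g b * g (D - a) := by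
      rw [hg]
      simp only
      rw [← Real.mul_rpow hs1 hs2, ← Real.mul_rpow hs3 hs4]
      exact Real.rpow_le_rpow (mul_nonneg hs1 hs2)
        (sK_cross hκD ha1.le hab.le hb2.le) hN1.le
    rw [div_lt_div_iff₀ (hden_pos a ha1 ha2) (hden_pos b hb1 hb2)]
    have hABlt : A a * B b < A b * B a := by nlinarith
    have hfin : A a * B b * (g b * g (D - a)) < A b * B a * (g b * g (D - a)) :=
      mul_lt_mul_of_pos_right hABlt (mul_pos hPb hQa)
    nlinarith [mul_le_mul_of_nonneg_left hcross (mul_nonneg hAa.le hBb.le), hfin]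
  have hvnn : ∀ a : ℝ, 0 < a → a < D → 0 < vKND K N D a := by
    intro a h1 h2
    rw [hrep a h1 h2, hw]
    simp only
    exact div_pos (mul_pos (hA_pos a h1 h2.le) (hg_pos a h1 h2)) (hden_pos a h1 h2)
  have hvlt1 : ∀ a : ℝ, 0 < a → a < D → vKND K N D a < 1 := by
    intro a h1 h2
    rw [hrep a h1 h2, hw]
    simp only
    rw [div_lt_one (hden_pos a h1 h2)]
    nlinarith [mul_pos (hB_pos a h1.le h2) (hg_pos (D - a) (by linarith) (by linarith))]
  have hc0 : 0 < B (D / 2) := hB_pos _ (by linarith) (by linarith)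
  have hbound : ∀ a : ℝ, 0 < a → a ≤ D / 2 → vKND K N D a ≤ A a / B (D / 2) := by
    intro a h1 h2
    have h2' : a < D := by linarith
    have hPa : 0 < g a := hg_pos a h1 h2'
    have hQa : 0 < g (D - a) := hg_pos _ (by linarith) (by linarith)
    have hAa := hA_pos a h1 h2'.le
    have hBa := hB_pos a h1.le h2'
    have hPQ : g a ≤ g (D - a) := by
      have hkey := sK_cross hκD h1.le (show a ≤ D - a by linarith) (show D - a ≤ D by linarith)
      rw [sub_sub_cancel] at hkey
      have hsa : 0 ≤ sK κ a := sK_nonneg' hκD h1.le h2'.le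
      have hsd : 0 ≤ sK κ (D - a) := sK_nonneg' hκD (by linarith) (by linarith)
      have hle : sK κ a ≤ sK κ (D - a) := by nlinarith
      rw [hg]
      simp only
      exact Real.rpow_le_rpow hsa hle hN1.le
    have hBc : B (D / 2) ≤ B a := by
      rcases eq_or_lt_of_le h2 with h | h
      · rw [h]
      · exact (hB_anti a (D / 2) h1.le h (by linarith)).le
    rw [hrep a h1 h2', hw]
    simp only
    have step1 : A a * g a / (A a * g a + B a * g (D - a)) ≤ A a * g a / (B a * g (D - a)) := by
      rw [div_le_div_iff_of_pos_left (mul_pos hAa hPa) (hden_pos a h1 h2') (mul_pos hBa hQa)]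
      nlinarith
    have step2 : A a * g a / (B a * g (D - a)) ≤ A a / B (D / 2) := by
      rw [div_le_div_iff₀ (mul_pos hBa hQa) hc0]
      have t1 : A a * g a * B (D / 2) ≤ A a * g (D - a) * B a := by
        refine mul_le_mul (mul_le_mul_of_nonneg_left hPQ hAa.le) hBc hc0.le ?_
        exact (mul_pos hAa hQa).le
      nlinarith [t1]
    linarith
  have hAtend : Tendsto A (𝓝[>] (0:ℝ)) (𝓝 0) := by
    have h0 : A 0 = 0 := by rw [hA]; simp
    have h1 := (hA_cont.tendsto 0).mono_left (nhdsWithin_le_nhds (s := Set.Ioi (0:ℝ)))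
    rwa [h0] at h1
  have hlim0 : Tendsto (vKND K N D) (𝓝[>] (0:ℝ)) (𝓝 0) := by
    have hmem : Set.Ioo (0:ℝ) (D / 2) ∈ 𝓝[>] (0:ℝ) :=
      Ioo_mem_nhdsGT_of_mem ⟨le_refl (0:ℝ), by linarith⟩
    have hg0 : Tendsto (fun a => A a / B (D / 2)) (𝓝[>] (0:ℝ)) (𝓝 0) := by
      simpa using hAtend.div_const (B (D / 2))
    refine squeeze_zero' ?_ ?_ hg0
    · filter_upwards [hmem] with a ha
      exact (hvnn a ha.1 (by linarith [ha.2])).le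
    · filter_upwards [hmem] with a ha
      exact hbound a ha.1 (le_of_lt ha.2)
  have hDtend : Tendsto (fun a => D - a) (𝓝[<] D) (𝓝[>] (0:ℝ)) := by
    apply tendsto_nhdsWithin_of_tendsto_nhds_of_eventually_within
    · have h1 : Tendsto (fun a : ℝ => D - a) (𝓝 D) (𝓝 (D - D)) :=
        (continuous_const.sub continuous_id).tendsto D
      rw [sub_self] at h1
      exact h1.mono_left nhdsWithin_le_nhds
    · filter_upwards [self_mem_nhdsWithin] with a ha
      exact sub_pos.mpr (Set.mem_Iio.mp ha)
  have hlimD : Tendsto (vKND K N D) (𝓝[<] D) (𝓝 1) := by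
    have h2 : Tendsto (fun a => 1 - vKND K N D (D - a)) (𝓝[<] D) (𝓝 (1 - 0)) :=
      tendsto_const_nhds.sub (hlim0.comp hDtend)
    rw [sub_zero] at h2
    refine h2.congr' ?_
    filter_upwards [Ioo_mem_nhdsLT_of_mem (show D ∈ Set.Ioc 0 D from ⟨hD, le_refl D⟩)] with a ha
    have h3 := hsymm (D - a) (by linarith [ha.2]) (by linarith [ha.1])
    rw [sub_sub_cancel] at h3
    linarith
  have hw_cont : ContinuousOn w (Set.Ioo 0 D) := by
    rw [hw]
    apply ContinuousOn.div
    · exact (hA_cont.mul hg_cont).continuousOn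
    · exact ((hA_cont.mul hg_cont).add (hB_cont.mul hgD_cont)).continuousOn
    · intro x hx
      exact (hden_pos x hx.1 hx.2).ne'
  refine ⟨hmono, ?_, hmono.injOn, ?_⟩
  · intro a ha
    exact ⟨hvnn a ha.1 ha.2, hvlt1 a ha.1 ha.2⟩
  · intro t ht
    have hmem0 : Set.Ioo (0:ℝ) D ∈ 𝓝[>] (0:ℝ) :=
      Ioo_mem_nhdsGT_of_mem ⟨le_refl (0:ℝ), hD⟩
    have hmemD : Set.Ioo (0:ℝ) D ∈ 𝓝[<] D :=
      Ioo_mem_nhdsLT_of_mem ⟨hD, le_refl D⟩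
    obtain ⟨a₁, hv₁, ha₁⟩ :=
      ((hlim0.eventually_lt_const ht.1).and (eventually_mem_set.mpr hmem0)).exists
    obtain ⟨a₂, hv₂, ha₂⟩ :=
      ((hlimD.eventually_const_lt ht.2).and (eventually_mem_set.mpr hmemD)).exists
    have h12 : a₁ < a₂ := by
      by_contra hle
      push_neg at hle
      rcases eq_or_lt_of_le hle with h | h
      · rw [h] at hv₂; linarith
      · have := hmono ha₂ ha₁ h; linarith
    have hsub : Set.Icc a₁ a₂ ⊆ Set.Ioo 0 D := Set.Icc_subset_Ioo ha₁.1 ha₂.2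
    have htmem : t ∈ Set.Ioo (w a₁) (w a₂) := by
      constructor
      · rw [← hrep a₁ ha₁.1 ha₁.2]; exact hv₁
      · rw [← hrep a₂ ha₂.1 ha₂.2]; exact hv₂
    obtain ⟨c, hc, hct⟩ := intermediate_value_Ioo h12.le (hw_cont.mono hsub) htmem
    have hcmem : c ∈ Set.Ioo 0 D := hsub (Set.Ioo_subset_Icc_self hc)
    exact ⟨c, hcmem, by rw [hrep c hcmem.1 hcmem.2]; exact hct⟩

end
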